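/- arXiv:1808.00363 — 4 statements merged into one kernel-verified Lean document; each statement's English description precedes it below -/
import Mathlib

section
/- If F(x) and A_r(x,u) satisfy F(x) = x·Φ(F(x)) and A_r(x,u) = x·Φ(A_r(x,u)) + (1 − 1/u)F_r(xu), then the partial derivative of A_r with respect to u evaluated at u = 1 equals F_r(x)/(1 − x·Φ'(F(x))), as formal power series, provided 1 − x·Φ'(F(x)) is invertible (its constant term is nonzero). -/
open PowerSeries

/-- composition `Φ ∘ g` of formal power series (intended for `g` with zero constant
term, in which case the coefficient of `xⁿ` is the finite sum
`Σ_{k ≤ n} [tᵏ]Φ · [xⁿ](gᵏ)`). -/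
noncomputable def pscomp {R : Type*} [CommSemiring R] (Φ g : PowerSeries R) : PowerSeries R :=
  PowerSeries.mk fun n =>
    ∑ k ∈ Finset.range (n + 1), (PowerSeries.coeff k Φ) * PowerSeries.coeff n (g ^ k)

/-- the coefficientwise partial derivative `∂/∂u` of a power series in `x` with
polynomial coefficients in `u`, evaluated at `u = 1` -/
noncomputable def duAtOne (A : PowerSeries (Polynomial ℝ)) : PowerSeries ℝ :=
  PowerSeries.mk fun n =>
    Polynomial.eval 1 (Polynomial.derivative (PowerSeries.coeff n A))

lemma coeff_duAtOne (A : PowerSeries (Polynomial ℝ)) (n : ℕ) :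
    PowerSeries.coeff n (duAtOne A) =
      Polynomial.eval 1 (Polynomial.derivative (PowerSeries.coeff n A)) := by
  simp [duAtOne]

lemma duAtOne_add (P Q : PowerSeries (Polynomial ℝ)) :
    duAtOne (P + Q) = duAtOne P + duAtOne Q := by
  ext n; simp [coeff_duAtOne]

lemma duAtOne_sub (P Q : PowerSeries (Polynomial ℝ)) :
    duAtOne (P - Q) = duAtOne P - duAtOne Q := by
  ext n; simp [coeff_duAtOne]

lemma duAtOne_one : duAtOne (1 : PowerSeries (Polynomial ℝ)) = 0 := by
  ext n; simp [coeff_duAtOne, PowerSeries.coeff_one, apply_ite]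

lemma duAtOne_X : duAtOne (PowerSeries.X : PowerSeries (Polynomial ℝ)) = 0 := by
  ext n; simp [coeff_duAtOne, PowerSeries.coeff_X, apply_ite]

lemma duAtOne_mul (P Q : PowerSeries (Polynomial ℝ)) :
    duAtOne (P * Q) =
      duAtOne P * PowerSeries.map (Polynomial.evalRingHom (1 : ℝ)) Q +
      PowerSeries.map (Polynomial.evalRingHom (1 : ℝ)) P * duAtOne Q := by
  ext n
  simp [coeff_duAtOne, PowerSeries.coeff_mul, Finset.sum_add_distrib, Polynomial.derivative_mul, Polynomial.eval_finset_sum]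

lemma duAtOne_pow (A : PowerSeries (Polynomial ℝ)) (j : ℕ) :
    duAtOne (A ^ (j + 1)) =
      PowerSeries.C ((j : ℝ) + 1) *
        ((PowerSeries.map (Polynomial.evalRingHom (1 : ℝ)) A) ^ j * duAtOne A) := by
  induction j with
  | zero => simp
  | succ j ih =>
      rw [pow_succ, duAtOne_mul, ih, map_pow]
      push_cast
      simp only [map_add, map_one, map_ofNat]
      ring

lemma coeff_pow_eq_zero {g : PowerSeries ℝ} (hg : PowerSeries.constantCoeff g = 0)
    {i j : ℕ} (h : i < j) : PowerSeries.coeff i (g ^ j) = 0 := by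
  have hdvd : (PowerSeries.X : PowerSeries ℝ) ^ j ∣ g ^ j :=
    pow_dvd_pow_of_dvd (PowerSeries.X_dvd_iff.mpr hg) j
  exact PowerSeries.X_pow_dvd_iff.mp hdvd i h

lemma coeff_pscomp_mul (G g K : PowerSeries ℝ) (hg : PowerSeries.constantCoeff g = 0)
    (n : ℕ) :
    PowerSeries.coeff n (pscomp G g * K) =
      ∑ j ∈ Finset.range (n + 1), PowerSeries.coeff j G * PowerSeries.coeff n (g ^ j * K) := by
  rw [PowerSeries.coeff_mul]
  simp only [pscomp, PowerSeries.coeff_mk]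
  have step1 : ∀ p ∈ Finset.HasAntidiagonal.antidiagonal n,
      (∑ k ∈ Finset.range (p.1 + 1),
        PowerSeries.coeff k G * PowerSeries.coeff p.1 (g ^ k)) * PowerSeries.coeff p.2 K =
      ∑ k ∈ Finset.range (n + 1),
        PowerSeries.coeff k G * (PowerSeries.coeff p.1 (g ^ k) * PowerSeries.coeff p.2 K) := by
    intro p hp
    rw [Finset.sum_mul]
    simp only [mul_assoc]
    apply Finset.sum_subset
    · intro k hk
      simp only [Finset.mem_range] at hk ⊢
      have := Finset.HasAntidiagonal.antidiagonal.fst_le hp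
      omega
    · intro k _ hk
      simp only [Finset.mem_range, not_lt] at hk
      rw [coeff_pow_eq_zero hg (by omega), zero_mul, mul_zero]
  rw [Finset.sum_congr rfl step1, Finset.sum_comm]
  refine Finset.sum_congr rfl fun j _ => ?_
  rw [PowerSeries.coeff_mul, Finset.mul_sum]

lemma map_pscomp (w : ℕ → ℝ) (A : PowerSeries (Polynomial ℝ)) :
    PowerSeries.map (Polynomial.evalRingHom (1 : ℝ))
        (pscomp (PowerSeries.mk fun k => Polynomial.C (w k)) A) =
      pscomp (PowerSeries.mk w) (PowerSeries.map (Polynomial.evalRingHom (1 : ℝ)) A) := by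
  ext n
  simp [pscomp, PowerSeries.coeff_map, ← map_pow]

lemma coeff_self_pow_mul (F K : PowerSeries ℝ) (hF0 : PowerSeries.constantCoeff F = 0)
    (hK0 : PowerSeries.coeff 0 K = 0) (n : ℕ) :
    PowerSeries.coeff n (F ^ n * K) = 0 := by
  rw [PowerSeries.coeff_mul]
  apply Finset.sum_eq_zero
  intro p hp
  have hpn := Finset.HasAntidiagonal.antidiagonal.fst_le hp
  rcases lt_or_eq_of_le hpn with h | h
  · rw [coeff_pow_eq_zero hF0 h, zero_mul]
  · have h2 : p.2 = 0 := by
      have := Finset.HasAntidiagonal.mem_antidiagonal.mp hp; omega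
    rw [h2, hK0, mul_zero]

lemma constantCoeff_duAtOne (A : PowerSeries (Polynomial ℝ))
    (hA0 : PowerSeries.constantCoeff A = 0) :
    PowerSeries.coeff 0 (duAtOne A) = 0 := by
  rw [coeff_duAtOne, PowerSeries.coeff_zero_eq_constantCoeff, hA0]
  simp

lemma duAtOne_pscomp (w : ℕ → ℝ) (A : PowerSeries (Polynomial ℝ))
    (hA0 : PowerSeries.constantCoeff A = 0) :
    duAtOne (pscomp (PowerSeries.mk fun k => Polynomial.C (w k)) A) =
      pscomp (PowerSeries.derivativeFun (PowerSeries.mk w))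
          (PowerSeries.map (Polynomial.evalRingHom (1 : ℝ)) A) * duAtOne A := by
  set F := PowerSeries.map (Polynomial.evalRingHom (1 : ℝ)) A with hFdef
  have hF0 : PowerSeries.constantCoeff F = 0 := by
    rw [hFdef, ← PowerSeries.coeff_zero_eq_constantCoeff, PowerSeries.coeff_map,
      PowerSeries.coeff_zero_eq_constantCoeff, hA0]
    simp
  ext n
  rw [coeff_pscomp_mul _ _ _ hF0]
  have lhs : PowerSeries.coeff n (duAtOne (pscomp (PowerSeries.mk fun k => Polynomial.C (w k)) A))
      = ∑ k ∈ Finset.range (n + 1),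
          w k * PowerSeries.coeff n (duAtOne (A ^ k)) := by
    rw [coeff_duAtOne]
    simp [pscomp, coeff_duAtOne, Polynomial.eval_finset_sum]
  rw [lhs, Finset.sum_range_succ', Finset.sum_range_succ]
  have last0 : PowerSeries.coeff n (F ^ n * duAtOne A) = 0 :=
    coeff_self_pow_mul _ _ hF0 (constantCoeff_duAtOne A hA0) n
  have first0 : w 0 * PowerSeries.coeff n (duAtOne (A ^ 0)) = 0 := by
    simp [duAtOne_one]
  rw [first0, last0, add_zero, mul_zero, add_zero]
  refine Finset.sum_congr rfl fun i _ => ?_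
  rw [duAtOne_pow, PowerSeries.coeff_C_mul, @id (∀ (f : PowerSeries ℝ) (m : ℕ),
      PowerSeries.coeff m f.derivativeFun = PowerSeries.coeff (m + 1) f * (m + 1))
      (fun f m => PowerSeries.coeff_derivative f m), PowerSeries.coeff_mk,
    ← hFdef]
  push_cast
  ring

/-- If `F(x) = x·Φ(F(x))` and `A_r(x,u) = x·Φ(A_r(x,u)) + (1 − 1/u)·F_r(xu)` (the
latter stated after multiplication by `u`), then
`∂A_r/∂u |_{u=1} = F_r(x) / (1 − x·Φ'(F(x)))` as formal power series, provided
`1 − x·Φ'(F(x))` is invertible (its constant term is nonzero). -/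
theorem du_gfBiv_at_one (wseq : ℕ → ℝ) (hw : ∀ k, 0 ≤ wseq k) (hw0 : wseq 0 = 1)
    (Φ F Fr : PowerSeries ℝ) (hΦ : Φ = PowerSeries.mk wseq)
    (hF0 : PowerSeries.constantCoeff F = 0)
    (hFr0 : PowerSeries.constantCoeff Fr = 0)
    (hF : F = PowerSeries.X * pscomp Φ F)
    (A : PowerSeries (Polynomial ℝ))
    (hA0 : PowerSeries.constantCoeff A = 0)
    (hAu1 : PowerSeries.map (Polynomial.evalRingHom (1 : ℝ)) A = F)
    (hA : PowerSeries.C (Polynomial.X : Polynomial ℝ) * A =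
      PowerSeries.C (Polynomial.X : Polynomial ℝ) *
        (PowerSeries.X * pscomp (PowerSeries.mk fun k => Polynomial.C (wseq k)) A) +
      (PowerSeries.C (Polynomial.X : Polynomial ℝ) - 1) *
        (PowerSeries.mk fun n => Polynomial.C (PowerSeries.coeff n Fr) * Polynomial.X ^ n))
    (hinv : PowerSeries.constantCoeff
      (1 - PowerSeries.X * pscomp (PowerSeries.derivativeFun Φ) F) ≠ 0) :
    duAtOne A =
      Fr * (1 - PowerSeries.X * pscomp (PowerSeries.derivativeFun Φ) F)⁻¹ := by
  subst hΦ
  have hDCu : duAtOne (PowerSeries.C (Polynomial.X : Polynomial ℝ)) = 1 := by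
    ext n
    simp only [coeff_duAtOne, PowerSeries.coeff_C, PowerSeries.coeff_one]
    split <;> simp
  have hECu : PowerSeries.map (Polynomial.evalRingHom (1 : ℝ))
      (PowerSeries.C (Polynomial.X : Polynomial ℝ)) = 1 := by
    ext n
    simp only [PowerSeries.coeff_map, PowerSeries.coeff_C, PowerSeries.coeff_one]
    split <;> simp
  have hEG : PowerSeries.map (Polynomial.evalRingHom (1 : ℝ))
      (PowerSeries.mk fun n => Polynomial.C (PowerSeries.coeff n Fr) * Polynomial.X ^ n) = Fr := by
    ext n
    simp [PowerSeries.coeff_map, PowerSeries.coeff_mk]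
  have key := congrArg duAtOne hA
  simp only [duAtOne_mul, duAtOne_add, duAtOne_sub, duAtOne_one, duAtOne_X, hDCu, hECu,
    duAtOne_pscomp wseq A hA0, map_mul, map_sub, map_one, PowerSeries.map_X, map_pscomp,
    hAu1, hEG, one_mul, mul_one, zero_mul, mul_zero, add_zero, zero_add, sub_self,
    sub_zero] at key
  have hc := PowerSeries.mul_inv_cancel
    (1 - PowerSeries.X * pscomp (PowerSeries.derivativeFun (PowerSeries.mk wseq)) F) hinv
  linear_combination
    (1 - PowerSeries.X * pscomp (PowerSeries.derivativeFun (PowerSeries.mk wseq)) F)⁻¹ * key -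
    (1 - PowerSeries.X * pscomp (PowerSeries.derivativeFun (PowerSeries.mk wseq)) F)⁻¹ * hF -
    duAtOne A * hc
end

section
/- Let Φ be a power series with nonnegative coefficients, radius of convergence R > 0, Φ(0) = 1, and suppose there exists τ with 0 < τ < R and Φ(τ) = τ·Φ'(τ). Set ρ = τ/Φ(τ). Define c_1 = ρ and c_r = ρ·Φ(c_{r-1}) for r > 1. Then (c_r) is increasing and converges to τ. -/
open Filter Topology

/-- Let `Φ(t) = Σ_k w_k tᵏ` be a power series with nonnegative coefficients, `Φ(0) = 1`,
some coefficient of index `> 1` positive, and radius of convergence `> τ`, where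
`τ > 0` satisfies `Φ(τ) = τ·Φ'(τ)`, and set `ρ = τ/Φ(τ)`.  If `c_1 = ρ` and
`c_r = ρ·Φ(c_{r-1})` for `r > 1`, then `(c_r)` is increasing and converges to `τ`. -/
theorem c_seq_increasing_tendsto_tau (w : ℕ → ℝ) (hw : ∀ k, 0 ≤ w k) (hw0 : w 0 = 1)
    (hwk : ∃ k, 1 < k ∧ 0 < w k)
    (τ : ℝ) (hτ : 0 < τ)
    (hrad : ∃ s, τ < s ∧ Summable fun k => w k * s ^ k)
    (Φ Φd : ℝ → ℝ)
    (hΦ : ∀ t, Φ t = ∑' k : ℕ, w k * t ^ k)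
    (hΦd : ∀ t, Φd t = ∑' k : ℕ, (k : ℝ) * w k * t ^ (k - 1))
    (hcrit : Φ τ = τ * Φd τ)
    (ρ : ℝ) (hρ : ρ = τ / Φ τ)
    (c : ℕ → ℝ) (hc1 : c 1 = ρ) (hcrec : ∀ r, 1 ≤ r → c (r + 1) = ρ * Φ (c r)) :
    (∀ r, 1 ≤ r → c r ≤ c (r + 1)) ∧ Tendsto c atTop (𝓝 τ) := by
  obtain ⟨s, hτs, hsum_s⟩ := hrad
  have hs0 : 0 < s := hτ.trans hτs
  obtain ⟨k₀, hk₀1, hk₀pos⟩ := hwk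
  -- summability on [0, s]
  have hsumx : ∀ x : ℝ, 0 ≤ x → x ≤ s → Summable fun k => w k * x ^ k := by
    intro x hx0 hxs
    refine Summable.of_nonneg_of_le (fun k => mul_nonneg (hw k) (pow_nonneg hx0 k)) (fun k => ?_) hsum_s
    exact mul_le_mul_of_nonneg_left (pow_le_pow_left₀ hx0 hxs k) (hw k)
  have hsumτ := hsumx τ hτ.le hτs.le
  -- bound on coefficients
  set B := ∑' k, w k * s ^ k with hB
  have hwB : ∀ k, w k * s ^ k ≤ B := fun k =>
    Summable.le_tsum hsum_s k (fun j _ => mul_nonneg (hw j) (pow_nonneg hs0.le j))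
  -- summability of the derivative series at τ
  have hsumd : Summable fun k : ℕ => (k : ℝ) * w k * τ ^ (k - 1) := by
    have hr : ‖τ / s‖ < 1 := by
      rw [Real.norm_eq_abs, abs_of_pos (by positivity)]
      exact (div_lt_one hs0).2 hτs
    have h1 : Summable fun k : ℕ => (B / τ) * ((k : ℝ) ^ 1 * (τ / s) ^ k) :=
      (summable_pow_mul_geometric_of_norm_lt_one 1 hr).mul_left _
    refine Summable.of_nonneg_of_le (fun k => mul_nonneg (mul_nonneg (Nat.cast_nonneg k) (hw k)) (pow_nonneg hτ.le _)) (fun k => ?_) h1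
    rcases Nat.eq_zero_or_pos k with hk | hk
    · simp [hk]
    · have hτk : (τ / s) ^ k = τ ^ (k - 1) * τ / s ^ k := by
        rw [div_pow]
        congr 1
        rw [← pow_succ]
        congr 1
        omega
      have hwk' : w k ≤ B / s ^ k := (le_div_iff₀ (by positivity)).2 (hwB k)
      have hrhs : B / τ * ((k : ℝ) ^ 1 * (τ / s) ^ k) = (k : ℝ) * (B / s ^ k) * τ ^ (k - 1) := by
        rw [hτk]
        field_simp
      rw [hrhs]
      have hk1 : (0:ℝ) ≤ (k : ℝ) := Nat.cast_nonneg k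
      have hτ1 : (0:ℝ) ≤ τ ^ (k - 1) := by positivity
      calc (k : ℝ) * w k * τ ^ (k - 1) ≤ (k : ℝ) * (B / s ^ k) * τ ^ (k - 1) := by
            apply mul_le_mul_of_nonneg_right _ hτ1
            exact mul_le_mul_of_nonneg_left hwk' hk1
        _ = (k : ℝ) * (B / s ^ k) * τ ^ (k - 1) := rfl
  -- Φ x ≥ 1 for 0 ≤ x ≤ s
  have hΦ1 : ∀ x : ℝ, 0 ≤ x → x ≤ s → 1 ≤ Φ x := by
    intro x hx0 hxs
    rw [hΦ]
    have := Summable.le_tsum (hsumx x hx0 hxs) 0 (fun j _ => mul_nonneg (hw j) (pow_nonneg hx0 j))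
    simpa [hw0] using this
  have hΦτ1 : 1 ≤ Φ τ := hΦ1 τ hτ.le hτs.le
  have hΦτpos : 0 < Φ τ := lt_of_lt_of_le one_pos hΦτ1
  have hρpos : 0 < ρ := by rw [hρ]; positivity
  have hρτ : ρ ≤ τ := by
    rw [hρ]
    calc τ / Φ τ ≤ τ / 1 := by
          apply div_le_div_of_nonneg_left hτ.le one_pos hΦτ1
      _ = τ := div_one τ
  have hρΦτ : ρ * Φ τ = τ := by rw [hρ]; field_simp
  have hρΦd : ρ * Φd τ = 1 := by
    rw [hρ]
    field_simp
    linarith [hcrit]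
  -- monotonicity of Φ on [0, τ]
  have hmono : ∀ x : ℝ, 0 ≤ x → x ≤ τ → Φ x ≤ Φ τ := by
    intro x hx0 hxτ
    rw [hΦ, hΦ]
    refine Summable.tsum_le_tsum (fun k => ?_) (hsumx x hx0 (hxτ.trans hτs.le)) hsumτ
    exact mul_le_mul_of_nonneg_left (pow_le_pow_left₀ hx0 hxτ k) (hw k)
  -- the key strict inequality : x < ρ Φ x for 0 ≤ x < τ
  have key : ∀ x : ℝ, 0 ≤ x → x < τ → x < ρ * Φ x := by
    intro x hx0 hxτ
    have hxs : x ≤ s := (hxτ.trans hτs).le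
    have hsx := hsumx x hx0 hxs
    have hsum2 : Summable fun k : ℕ => (τ - x) * ((k : ℝ) * w k * τ ^ (k - 1)) :=
      hsumd.mul_left _
    -- termwise inequalities
    have hterm : ∀ k : ℕ, w k * τ ^ k ≤ w k * x ^ k + (τ - x) * ((k : ℝ) * w k * τ ^ (k - 1)) := by
      intro k
      rcases Nat.eq_zero_or_pos k with hk | hk
      · simp [hk]
      · have hS : (∑ i ∈ Finset.range k, τ ^ i * x ^ (k - 1 - i)) * (τ - x) = τ ^ k - x ^ k :=
          geom_sum₂_mul τ x k
        have hSle : (∑ i ∈ Finset.range k, τ ^ i * x ^ (k - 1 - i)) ≤ (k : ℝ) * τ ^ (k - 1) := by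
          have h := Finset.sum_le_card_nsmul (Finset.range k)
            (fun i => τ ^ i * x ^ (k - 1 - i)) (τ ^ (k - 1)) ?_
          · simpa [nsmul_eq_mul] using h
          · intro i hi
            rw [Finset.mem_range] at hi
            calc τ ^ i * x ^ (k - 1 - i) ≤ τ ^ i * τ ^ (k - 1 - i) := by
                  apply mul_le_mul_of_nonneg_left (pow_le_pow_left₀ hx0 hxτ.le _) (by positivity)
              _ = τ ^ (k - 1) := by rw [← pow_add]; congr 1; omega
        have h3 : w k * (τ ^ k - x ^ k) ≤ w k * ((k : ℝ) * τ ^ (k - 1) * (τ - x)) := by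
          apply mul_le_mul_of_nonneg_left _ (hw k)
          rw [← hS]
          exact mul_le_mul_of_nonneg_right hSle (by linarith)
        nlinarith [h3]
    have hstrict : w k₀ * τ ^ k₀ <
        w k₀ * x ^ k₀ + (τ - x) * ((k₀ : ℝ) * w k₀ * τ ^ (k₀ - 1)) := by
      have hS : (∑ i ∈ Finset.range k₀, τ ^ i * x ^ (k₀ - 1 - i)) * (τ - x) = τ ^ k₀ - x ^ k₀ :=
        geom_sum₂_mul τ x k₀
      have hSlt : (∑ i ∈ Finset.range k₀, τ ^ i * x ^ (k₀ - 1 - i)) < (k₀ : ℝ) * τ ^ (k₀ - 1) := by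
        have h := Finset.sum_lt_sum (f := fun i => τ ^ i * x ^ (k₀ - 1 - i))
          (g := fun _ => τ ^ (k₀ - 1)) (s := Finset.range k₀) ?_ ?_
        · calc (∑ i ∈ Finset.range k₀, τ ^ i * x ^ (k₀ - 1 - i))
              < ∑ _i ∈ Finset.range k₀, τ ^ (k₀ - 1) := h
            _ = (k₀ : ℝ) * τ ^ (k₀ - 1) := by
                rw [Finset.sum_const, Finset.card_range, nsmul_eq_mul]
        · intro i hi
          rw [Finset.mem_range] at hi
          calc τ ^ i * x ^ (k₀ - 1 - i) ≤ τ ^ i * τ ^ (k₀ - 1 - i) := by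
                apply mul_le_mul_of_nonneg_left (pow_le_pow_left₀ hx0 hxτ.le _) (by positivity)
            _ = τ ^ (k₀ - 1) := by rw [← pow_add]; congr 1; omega
        · refine ⟨0, Finset.mem_range.2 (by omega), ?_⟩
          simp only [pow_zero, one_mul, Nat.sub_zero]
          exact pow_lt_pow_left₀ hxτ hx0 (by omega)
      have h3 : w k₀ * (τ ^ k₀ - x ^ k₀) < w k₀ * ((k₀ : ℝ) * τ ^ (k₀ - 1) * (τ - x)) := by
        apply mul_lt_mul_of_pos_left _ hk₀pos
        rw [← hS]
        exact mul_lt_mul_of_pos_right hSlt (by linarith)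
      nlinarith [h3]
    have hlt : Φ τ < Φ x + (τ - x) * Φd τ := by
      rw [hΦ, hΦ, hΦd, ← tsum_mul_left, ← Summable.tsum_add hsx hsum2]
      exact Summable.tsum_lt_tsum hterm hstrict hsumτ (hsx.add hsum2)
    have h2 : ρ * ((τ - x) * Φd τ) = τ - x := by
      rw [show ρ * ((τ - x) * Φd τ) = (τ - x) * (ρ * Φd τ) by ring, hρΦd, mul_one]
    nlinarith [mul_lt_mul_of_pos_left hlt hρpos, h2, hρΦτ]
  -- the non-strict version on [0, τ]
  have hge : ∀ x : ℝ, 0 ≤ x → x ≤ τ → x ≤ ρ * Φ x := by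
    intro x hx0 hxτ
    rcases eq_or_lt_of_le hxτ with h | h
    · rw [h, hρΦτ]
    · exact (key x hx0 h).le
  -- upper bound : ρ Φ x ≤ τ on [0, τ]
  have hub : ∀ x : ℝ, 0 ≤ x → x ≤ τ → ρ * Φ x ≤ τ := by
    intro x hx0 hxτ
    calc ρ * Φ x ≤ ρ * Φ τ := mul_le_mul_of_nonneg_left (hmono x hx0 hxτ) hρpos.le
      _ = τ := hρΦτ
  -- bounds on the sequence
  have hbd : ∀ r : ℕ, 1 ≤ r → ρ ≤ c r ∧ c r ≤ τ := by
    intro r hr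
    induction r, hr using Nat.le_induction with
    | base => rw [hc1]; exact ⟨le_refl ρ, hρτ⟩
    | succ n hn ih =>
      rw [hcrec n hn]
      obtain ⟨h1, h2⟩ := ih
      have hcn0 : 0 ≤ c n := le_trans hρpos.le h1
      constructor
      · calc ρ = ρ * 1 := (mul_one ρ).symm
          _ ≤ ρ * Φ (c n) :=
            mul_le_mul_of_nonneg_left (hΦ1 (c n) hcn0 (h2.trans hτs.le)) hρpos.le
      · exact hub (c n) hcn0 h2
  -- increasing
  have hinc : ∀ r : ℕ, 1 ≤ r → c r ≤ c (r + 1) := by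
    intro r hr
    rw [hcrec r hr]
    obtain ⟨h1, h2⟩ := hbd r hr
    exact hge (c r) (le_trans hρpos.le h1) h2
  refine ⟨hinc, ?_⟩
  -- convergence
  set d : ℕ → ℝ := fun n => c (n + 1) with hd
  have hdmono : Monotone d := monotone_nat_of_le_succ fun n => hinc (n + 1) (by omega)
  have hdbd : ∀ n, ρ ≤ d n ∧ d n ≤ τ := fun n => hbd (n + 1) (by omega)
  have hbdd : BddAbove (Set.range d) := ⟨τ, fun y ⟨n, hn⟩ => hn ▸ (hdbd n).2⟩
  have hL : Tendsto d atTop (𝓝 (⨆ n, d n)) := tendsto_atTop_ciSup hdmono hbdd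
  set L := ⨆ n, d n with hLdef
  have hLle : L ≤ τ := ciSup_le fun n => (hdbd n).2
  have hLge : ρ ≤ L := le_trans (hdbd 0).1 (le_ciSup hbdd 0)
  have hL0 : 0 ≤ L := le_trans hρpos.le hLge
  -- continuity of Φ on [-s, s]
  have hΦeq : Φ = fun x => ∑' k : ℕ, w k * x ^ k := funext hΦ
  have hΦcont : ContinuousOn Φ (Set.Icc (-s) s) := by
    rw [hΦeq]
    refine continuousOn_tsum (fun k => (continuous_const.mul (continuous_pow k)).continuousOn)
      hsum_s (fun k x hx => ?_)
    have hxabs : |x| ≤ s := abs_le.2 ⟨hx.1, hx.2⟩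
    rw [Real.norm_eq_abs, abs_mul, abs_of_nonneg (hw k), abs_pow]
    exact mul_le_mul_of_nonneg_left (pow_le_pow_left₀ (abs_nonneg x) hxabs k) (hw k)
  have hLmem : L ∈ Set.Icc (-s) s := ⟨le_trans (by linarith) hL0, hLle.trans hτs.le⟩
  have hdmem : ∀ n, d n ∈ Set.Icc (-s) s := fun n =>
    ⟨le_trans (by linarith) (le_trans hρpos.le (hdbd n).1), ((hdbd n).2.trans hτs.le)⟩
  have hdL' : Tendsto d atTop (𝓝[Set.Icc (-s) s] L) :=
    tendsto_nhdsWithin_of_tendsto_nhds_of_eventually_within d hL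
      (Eventually.of_forall hdmem)
  have hΦdL : Tendsto (fun n => Φ (d n)) atTop (𝓝 (Φ L)) :=
    ((hΦcont L hLmem).tendsto).comp hdL'
  -- the limit is a fixed point
  have hfix : L = ρ * Φ L := by
    have h1 : Tendsto (fun n => d (n + 1)) atTop (𝓝 L) :=
      (tendsto_add_atTop_iff_nat 1).2 hL
    have h2 : (fun n => d (n + 1)) = fun n => ρ * Φ (d n) := by
      funext n
      exact hcrec (n + 1) (by omega)
    rw [h2] at h1
    exact tendsto_nhds_unique h1 (hΦdL.const_mul ρ)
  -- hence L = τ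
  have hLτ : L = τ := by
    by_contra h
    have hLlt : L < τ := lt_of_le_of_ne hLle h
    exact absurd hfix (ne_of_lt (key L hL0 hLlt))
  rw [← hLτ]
  exact (tendsto_add_atTop_iff_nat 1).1 hL
end

section
/- With c_r as above (c_1 = ρ, c_r = ρ·Φ(c_{r-1}), c_r ↑ τ, ρΦ'(τ) = 1, Φ''(τ) > 0), the sequence 1/(τ − c_r) satisfies 1/(τ − c_r) = ρΦ''(τ)/2 · r + o(r) as r → ∞; equivalently τ − c_r ~ 2/(ρΦ''(τ) r). -/
open Filter Topology
set_option maxHeartbeats 1000000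

private lemma aux_cast (k : ℕ) : (k : ℝ) * ((k - 1 : ℕ) : ℝ) = (k : ℝ) * ((k : ℝ) - 1) := by
  cases k with
  | zero => simp
  | succ n => push_cast [Nat.succ_sub_one]; ring

private lemma aux_hd0 (w : ℕ → ℝ) (k : ℕ) (y : ℝ) :
    HasDerivAt (fun z => w k * z ^ k) ((k : ℝ) * w k * y ^ (k - 1)) y := by
  simpa [mul_comm, mul_assoc, mul_left_comm] using (hasDerivAt_pow k y).const_mul (w k)

private lemma aux_hd1 (w : ℕ → ℝ) (k : ℕ) (y : ℝ) :
    HasDerivAt (fun z => (k : ℝ) * w k * z ^ (k - 1))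
      ((k : ℝ) * ((k : ℝ) - 1) * w k * y ^ (k - 2)) y := by
  have h := (hasDerivAt_pow (k - 1) y).const_mul ((k : ℝ) * w k)
  have he : k - 1 - 1 = k - 2 := by omega
  refine h.congr_deriv ?_
  rw [he, ← aux_cast k]
  ring

private lemma aux_hd2 (w : ℕ → ℝ) (k : ℕ) (y : ℝ) :
    HasDerivAt (fun z => (k : ℝ) * ((k : ℝ) - 1) * w k * z ^ (k - 2))
      ((k : ℝ) * ((k : ℝ) - 1) * w k * (((k - 2 : ℕ) : ℝ) * y ^ (k - 3))) y := by
  have h := (hasDerivAt_pow (k - 2) y).const_mul ((k : ℝ) * ((k : ℝ) - 1) * w k)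
  have he : k - 2 - 1 = k - 3 := by omega
  refine h.congr_deriv ?_
  rw [he]

private lemma aux_key' {w : ℕ → ℝ} {s s' C : ℝ} (hs'0 : 0 < s') (hs's : s' < s)
    (hC : ∀ k, w k * s ^ k ≤ C) {k m : ℕ} (hm : m ≤ k) :
    w k * s' ^ (k - m) ≤ C * (s' / s) ^ k / s' ^ m := by
  have hs0 : 0 < s := hs'0.trans hs's
  rw [le_div_iff₀ (pow_pos hs'0 m), mul_assoc, pow_sub_mul_pow s' hm]
  have : s' ^ k = s ^ k * (s' / s) ^ k := by
    rw [← mul_pow, mul_div_cancel₀ _ hs0.ne']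
  rw [this, ← mul_assoc]
  exact mul_le_mul_of_nonneg_right (hC k) (pow_nonneg (by positivity) k)

private lemma aux_summable {w : ℕ → ℝ} (hw : ∀ k, 0 ≤ w k) {s : ℝ}
    (hsum : Summable fun k => w k * s ^ k) {x : ℝ} (hx0 : 0 ≤ x) (hxs : x ≤ s) :
    Summable fun k => w k * x ^ k :=
  hsum.of_nonneg_of_le (fun k => mul_nonneg (hw k) (pow_nonneg hx0 k))
    (fun k => mul_le_mul_of_nonneg_left (pow_le_pow_left₀ hx0 hxs k) (hw k))

private lemma aux_analytic {w : ℕ → ℝ} (hw : ∀ k, 0 ≤ w k) {s s' : ℝ} (hs'0 : 0 < s')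
    (hs's : s' < s) (hsum : Summable fun k => w k * s ^ k) :
    (∀ y ∈ Set.Ioo (-s') s',
        HasDerivAt (fun z => ∑' k : ℕ, w k * z ^ k) (∑' k : ℕ, (k : ℝ) * w k * y ^ (k - 1)) y)
    ∧ (∀ y ∈ Set.Ioo (-s') s',
        HasDerivAt (fun z => ∑' k : ℕ, (k : ℝ) * w k * z ^ (k - 1))
          (∑' k : ℕ, (k : ℝ) * ((k : ℝ) - 1) * w k * y ^ (k - 2)) y)
    ∧ (∀ y ∈ Set.Ioo (-s') s',
        ContinuousAt (fun z => ∑' k : ℕ, (k : ℝ) * ((k : ℝ) - 1) * w k * z ^ (k - 2)) y) := by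
  have hs0 : 0 < s := hs'0.trans hs's
  set C : ℝ := ∑' k, w k * s ^ k with hCdef
  have hC : ∀ k, w k * s ^ k ≤ C :=
    fun k => Summable.le_tsum hsum k (fun j _ => mul_nonneg (hw j) (pow_nonneg hs0.le j))
  have hC0 : 0 ≤ C := le_trans (mul_nonneg (hw 0) (pow_nonneg hs0.le 0)) (hC 0)
  set q : ℝ := s' / s with hqdef
  have hq0 : 0 ≤ q := by positivity
  have hq1 : q < 1 := (div_lt_one hs0).2 hs's
  have hq3 : Summable fun k : ℕ => (k : ℝ) ^ 3 * q ^ k :=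
    summable_pow_mul_geometric_of_norm_lt_one 3 (by rwa [Real.norm_eq_abs, abs_of_nonneg hq0])
  have hmem0 : (0 : ℝ) ∈ Set.Ioo (-s') s' := by constructor <;> simp [hs'0] <;> linarith
  have habs : ∀ y ∈ Set.Ioo (-s') s', |y| ≤ s' := fun y hy =>
    abs_le.2 ⟨hy.1.le, hy.2.le⟩
  have hkk : ∀ k : ℕ, 1 ≤ k → (k : ℝ) ≤ (k : ℝ) ^ 3 := by
    intro k hk
    have hk1 : (1 : ℝ) ≤ (k : ℝ) := Nat.one_le_cast.2 hk
    nlinarith [sq_nonneg ((k : ℝ) - 1), sq_nonneg ((k : ℝ) + 1)]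
  -- bound level 1
  have hb1 : ∀ (k : ℕ), ∀ y ∈ Set.Ioo (-s') s',
      ‖(k : ℝ) * w k * y ^ (k - 1)‖ ≤ C / s' * ((k : ℝ) ^ 3 * q ^ k) := by
    intro k y hy
    have h1 : ‖(k : ℝ) * w k * y ^ (k - 1)‖ = (k : ℝ) * w k * |y| ^ (k - 1) := by
      rw [Real.norm_eq_abs, abs_mul, abs_mul, abs_pow, Nat.abs_cast, abs_of_nonneg (hw k)]
    rw [h1]
    rcases Nat.eq_zero_or_pos k with hk | hk
    · subst hk; simp
    have hpos : (0 : ℝ) ≤ C * q ^ k / s' := by positivity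
    calc (k : ℝ) * w k * |y| ^ (k - 1) ≤ (k : ℝ) * (w k * s' ^ (k - 1)) := by
          rw [mul_assoc]
          exact mul_le_mul_of_nonneg_left
            (mul_le_mul_of_nonneg_left (pow_le_pow_left₀ (abs_nonneg y) (habs y hy) _) (hw k))
            (Nat.cast_nonneg k)
      _ ≤ (k : ℝ) * (C * q ^ k / s' ^ 1) :=
          mul_le_mul_of_nonneg_left (aux_key' hs'0 hs's hC hk) (Nat.cast_nonneg k)
      _ = (k : ℝ) * (C * q ^ k / s') := by rw [pow_one]
      _ ≤ (k : ℝ) ^ 3 * (C * q ^ k / s') := mul_le_mul_of_nonneg_right (hkk k hk) hpos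
      _ = C / s' * ((k : ℝ) ^ 3 * q ^ k) := by ring
  -- bound level 2
  have hb2 : ∀ (k : ℕ), ∀ y ∈ Set.Ioo (-s') s',
      ‖(k : ℝ) * ((k : ℝ) - 1) * w k * y ^ (k - 2)‖ ≤ C / s' ^ 2 * ((k : ℝ) ^ 3 * q ^ k) := by
    intro k y hy
    rcases lt_or_ge k 2 with hk | hk2
    · interval_cases k <;> simp <;> positivity
    · have hk1 : (1 : ℝ) ≤ (k : ℝ) := Nat.one_le_cast.2 (by omega)
      have h1 : ‖(k : ℝ) * ((k : ℝ) - 1) * w k * y ^ (k - 2)‖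
          = (k : ℝ) * ((k : ℝ) - 1) * w k * |y| ^ (k - 2) := by
        rw [Real.norm_eq_abs, abs_mul, abs_mul, abs_mul, abs_pow, Nat.abs_cast,
          abs_of_nonneg (hw k), abs_of_nonneg (by linarith : (0:ℝ) ≤ (k : ℝ) - 1)]
      rw [h1]
      have hpos : (0 : ℝ) ≤ C * q ^ k / s' ^ 2 := by positivity
      have hstep : w k * |y| ^ (k - 2) ≤ C * q ^ k / s' ^ 2 := by
        calc w k * |y| ^ (k - 2) ≤ w k * s' ^ (k - 2) :=
              mul_le_mul_of_nonneg_left (pow_le_pow_left₀ (abs_nonneg y) (habs y hy) _) (hw k)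
          _ ≤ C * q ^ k / s' ^ 2 := aux_key' hs'0 hs's hC hk2
      calc (k : ℝ) * ((k : ℝ) - 1) * w k * |y| ^ (k - 2)
          = ((k : ℝ) * ((k : ℝ) - 1)) * (w k * |y| ^ (k - 2)) := by ring
        _ ≤ ((k : ℝ) * (k : ℝ)) * (C * q ^ k / s' ^ 2) := by
            apply mul_le_mul _ hstep (mul_nonneg (hw k) (pow_nonneg (abs_nonneg y) _))
              (by positivity)
            have : (k : ℝ) - 1 ≤ (k : ℝ) := by linarith
            nlinarith
        _ ≤ ((k : ℝ) ^ 3) * (C * q ^ k / s' ^ 2) := by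
            apply mul_le_mul_of_nonneg_right _ hpos
            nlinarith [sq_nonneg ((k : ℝ) - 1)]
        _ = C / s' ^ 2 * ((k : ℝ) ^ 3 * q ^ k) := by ring
  -- bound level 3
  have hb3 : ∀ (k : ℕ), ∀ y ∈ Set.Ioo (-s') s',
      ‖(k : ℝ) * ((k : ℝ) - 1) * w k * (((k - 2 : ℕ) : ℝ) * y ^ (k - 3))‖
        ≤ C / s' ^ 3 * ((k : ℝ) ^ 3 * q ^ k) := by
    intro k y hy
    rcases lt_or_ge k 3 with hk | hk3
    · interval_cases k <;> simp <;> positivity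
    · have hk1 : (1 : ℝ) ≤ (k : ℝ) := Nat.one_le_cast.2 (by omega)
      have hcast2 : ((k - 2 : ℕ) : ℝ) ≤ (k : ℝ) := by
        have : ((k - 2 : ℕ) : ℝ) ≤ ((k : ℕ) : ℝ) := Nat.cast_le.2 (by omega)
        exact this
      have hcast2' : (0 : ℝ) ≤ ((k - 2 : ℕ) : ℝ) := Nat.cast_nonneg _
      have h1 : ‖(k : ℝ) * ((k : ℝ) - 1) * w k * (((k - 2 : ℕ) : ℝ) * y ^ (k - 3))‖
          = (k : ℝ) * ((k : ℝ) - 1) * w k * (((k - 2 : ℕ) : ℝ) * |y| ^ (k - 3)) := by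
        rw [Real.norm_eq_abs, abs_mul, abs_mul, abs_mul, abs_mul, abs_pow, Nat.abs_cast,
          Nat.abs_cast, abs_of_nonneg (hw k), abs_of_nonneg (by linarith : (0:ℝ) ≤ (k : ℝ) - 1)]
      rw [h1]
      have hpos : (0 : ℝ) ≤ C * q ^ k / s' ^ 3 := by positivity
      have hstep : w k * |y| ^ (k - 3) ≤ C * q ^ k / s' ^ 3 := by
        calc w k * |y| ^ (k - 3) ≤ w k * s' ^ (k - 3) :=
              mul_le_mul_of_nonneg_left (pow_le_pow_left₀ (abs_nonneg y) (habs y hy) _) (hw k)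
          _ ≤ C * q ^ k / s' ^ 3 := aux_key' hs'0 hs's hC hk3
      calc (k : ℝ) * ((k : ℝ) - 1) * w k * (((k - 2 : ℕ) : ℝ) * |y| ^ (k - 3))
          = (((k : ℝ) * ((k : ℝ) - 1)) * ((k - 2 : ℕ) : ℝ)) * (w k * |y| ^ (k - 3)) := by ring
        _ ≤ ((k : ℝ) * (k : ℝ) * (k : ℝ)) * (C * q ^ k / s' ^ 3) := by
            apply mul_le_mul _ hstep (mul_nonneg (hw k) (pow_nonneg (abs_nonneg y) _))
              (by positivity)
            have h2 : (k : ℝ) - 1 ≤ (k : ℝ) := by linarith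
            nlinarith
        _ = ((k : ℝ) ^ 3) * (C * q ^ k / s' ^ 3) := by ring
        _ = C / s' ^ 3 * ((k : ℝ) ^ 3 * q ^ k) := by ring
  -- base-point summability at 0
  have hbase0 : Summable fun k : ℕ => w k * (0 : ℝ) ^ k := by
    apply summable_of_ne_finset_zero (s := {0})
    intro k hk
    simp only [Finset.mem_singleton] at hk
    rw [zero_pow hk, mul_zero]
  have hbase1 : Summable fun k : ℕ => (k : ℝ) * w k * (0 : ℝ) ^ (k - 1) := by
    apply summable_of_ne_finset_zero (s := {0, 1})
    intro k hk
    simp only [Finset.mem_insert, Finset.mem_singleton] at hk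
    push_neg at hk
    rw [zero_pow (by omega), mul_zero]
  have hbase2 : Summable fun k : ℕ => (k : ℝ) * ((k : ℝ) - 1) * w k * (0 : ℝ) ^ (k - 2) := by
    apply summable_of_ne_finset_zero (s := {0, 1, 2})
    intro k hk
    simp only [Finset.mem_insert, Finset.mem_singleton] at hk
    push_neg at hk
    rw [zero_pow (by omega), mul_zero]
  have hpre : IsPreconnected (Set.Ioo (-s') s') := (convex_Ioo _ _).isPreconnected
  refine ⟨?_, ?_, ?_⟩
  · intro y hy
    exact hasDerivAt_tsum_of_isPreconnected (hq3.mul_left (C / s')) isOpen_Ioo hpre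
      (fun k z _ => aux_hd0 w k z) hb1 hmem0 hbase0 hy
  · intro y hy
    exact hasDerivAt_tsum_of_isPreconnected (hq3.mul_left (C / s' ^ 2)) isOpen_Ioo hpre
      (fun k z _ => aux_hd1 w k z) hb2 hmem0 hbase1 hy
  · intro y hy
    exact (hasDerivAt_tsum_of_isPreconnected (hq3.mul_left (C / s' ^ 3)) isOpen_Ioo hpre
      (fun k z _ => aux_hd2 w k z) hb3 hmem0 hbase2 hy).continuousAt
/-- With `c_1 = ρ`, `c_r = ρ·Φ(c_{r-1})`, `c_r ↑ τ`, `ρ·Φ'(τ) = 1` and `Φ''(τ) > 0`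
(standard simply generated setup), the sequence `1/(τ − c_r)` satisfies
`1/(τ − c_r) = ρΦ''(τ)/2 · r + o(r)`; equivalently `r·(τ − c_r) → 2/(ρΦ''(τ))`. -/
theorem tau_sub_c_asymptotics (w : ℕ → ℝ) (hw : ∀ k, 0 ≤ w k) (hw0 : w 0 = 1)
    (hwk : ∃ k, 1 < k ∧ 0 < w k)
    (τ : ℝ) (hτ : 0 < τ)
    (hrad : ∃ s, τ < s ∧ Summable fun k => w k * s ^ k)
    (Φ Φd : ℝ → ℝ) (Φdd : ℝ)
    (hΦ : ∀ t, Φ t = ∑' k : ℕ, w k * t ^ k)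
    (hΦd : ∀ t, Φd t = ∑' k : ℕ, (k : ℝ) * w k * t ^ (k - 1))
    (hΦdd : Φdd = ∑' k : ℕ, (k : ℝ) * ((k : ℝ) - 1) * w k * τ ^ (k - 2))
    (hcrit : Φ τ = τ * Φd τ)
    (ρ : ℝ) (hρ : ρ = τ / Φ τ) (hρΦd : ρ * Φd τ = 1) (hΦddpos : 0 < Φdd)
    (c : ℕ → ℝ) (hc1 : c 1 = ρ) (hcrec : ∀ r, 1 ≤ r → c (r + 1) = ρ * Φ (c r))
    (hmono : ∀ r, 1 ≤ r → c r ≤ c (r + 1)) (hlim : Tendsto c atTop (𝓝 τ)) :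
    Tendsto (fun r : ℕ => (r : ℝ) * (τ - c r)) atTop (𝓝 (2 / (ρ * Φdd))) := by
  obtain ⟨s, hτs, hsum⟩ := hrad
  have hs0 : 0 < s := hτ.trans hτs
  set s' : ℝ := (τ + s) / 2 with hs'def
  have hτs' : τ < s' := by rw [hs'def]; linarith
  have hs's : s' < s := by rw [hs'def]; linarith
  have hs'0 : 0 < s' := hτ.trans hτs'
  obtain ⟨H1, H2, H3⟩ := aux_analytic hw hs'0 hs's hsum
  have hτt : τ ∈ Set.Ioo (-s') s' := ⟨by linarith, hτs'⟩
  have hΦfun : Φ = fun z => ∑' k : ℕ, w k * z ^ k := funext hΦ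
  have hΦdfun : Φd = fun z => ∑' k : ℕ, (k : ℝ) * w k * z ^ (k - 1) := funext hΦd
  set S2 : ℝ → ℝ := fun z => ∑' k : ℕ, (k : ℝ) * ((k : ℝ) - 1) * w k * z ^ (k - 2) with hS2def
  have HΦ : ∀ y ∈ Set.Ioo (-s') s', HasDerivAt Φ (Φd y) y := by
    intro y hy; rw [hΦfun, hΦd y]; exact H1 y hy
  have HΦd : ∀ y ∈ Set.Ioo (-s') s', HasDerivAt Φd (S2 y) y := by
    intro y hy; rw [hΦdfun]; exact H2 y hy
  have HS2 : ContinuousAt S2 τ := H3 τ hτt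
  have hS2τ : S2 τ = Φdd := hΦdd.symm
  have hcontΦd : ContinuousAt Φd τ := (HΦd τ hτt).continuousAt
  -- basic positivity
  have hsumτ : Summable fun k => w k * τ ^ k := aux_summable hw hsum hτ.le hτs.le
  obtain ⟨k₀, hk₀1, hk₀w⟩ := hwk
  have hΦτ_gt1 : 1 < Φ τ := by
    rw [hΦ]
    have hfin : ∑ i ∈ ({0, k₀} : Finset ℕ), w i * τ ^ i ≤ ∑' k, w k * τ ^ k :=
      Summable.sum_le_tsum _ (fun i _ => mul_nonneg (hw i) (pow_nonneg hτ.le i)) hsumτ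
    rw [Finset.sum_pair (by omega : (0 : ℕ) ≠ k₀)] at hfin
    have hpos : 0 < w k₀ * τ ^ k₀ := mul_pos hk₀w (pow_pos hτ k₀)
    simp only [hw0, pow_zero, one_mul] at hfin
    linarith
  have hΦτ_pos : 0 < Φ τ := by linarith
  have hρ_pos : 0 < ρ := by rw [hρ]; positivity
  have hρΦτ : ρ * Φ τ = τ := by rw [hρ]; field_simp
  have hρτ : ρ < τ := by rw [hρ]; exact div_lt_self hτ hΦτ_gt1
  -- strict monotonicity of Φ on [0, τ]
  have hmonoΦ : ∀ a b : ℝ, 0 ≤ a → a < b → b ≤ τ → Φ a < Φ b := by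
    intro a b ha hab hbτ
    rw [hΦ, hΦ]
    have hsa : Summable fun k => w k * a ^ k := aux_summable hw hsum ha (by linarith)
    have hsb : Summable fun k => w k * b ^ k := aux_summable hw hsum (by linarith) (by linarith)
    refine Summable.tsum_lt_tsum (i := k₀) (fun j => ?_) ?_ hsa hsb
    · exact mul_le_mul_of_nonneg_left (pow_le_pow_left₀ ha hab.le j) (hw j)
    · exact mul_lt_mul_of_pos_left (pow_lt_pow_left₀ hab ha (by omega)) hk₀w
  -- c r in (0, τ)
  have hcbound : ∀ r, 1 ≤ r → 0 < c r ∧ c r < τ := by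
    intro r hr
    induction r, hr using Nat.le_induction with
    | base => rw [hc1]; exact ⟨hρ_pos, hρτ⟩
    | succ r hr ih =>
      obtain ⟨h0, h1⟩ := ih
      refine ⟨lt_of_lt_of_le h0 (hmono r hr), ?_⟩
      rw [hcrec r hr]
      calc ρ * Φ (c r) < ρ * Φ τ := mul_lt_mul_of_pos_left (hmonoΦ (c r) τ h0.le h1 le_rfl) hρ_pos
        _ = τ := hρΦτ
  have hd_pos : ∀ r, 1 ≤ r → 0 < τ - c r := fun r hr => sub_pos.2 (hcbound r hr).2
  have hd_lim : Tendsto (fun r => τ - c r) atTop (𝓝 0) := by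
    have h := (tendsto_const_nhds (x := τ) (f := atTop)).sub hlim
    simpa using h
  have hsubt : ∀ r, 1 ≤ r → Set.Icc (c r) τ ⊆ Set.Ioo (-s') s' := by
    intro r hr x hx
    obtain ⟨h0, _⟩ := hcbound r hr
    exact ⟨by linarith [hx.1], by linarith [hx.2]⟩
  -- MVT for Φd
  have hB : ∀ r, 1 ≤ r → ∃ ξ, ξ ∈ Set.Ioo (c r) τ ∧ Φd τ - Φd (c r) = S2 ξ * (τ - c r) := by
    intro r hr
    have hlt := (hcbound r hr).2
    have hsub := hsubt r hr
    have hcont : ContinuousOn Φd (Set.Icc (c r) τ) := fun x hx =>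
      ((HΦd x (hsub hx)).continuousAt).continuousWithinAt
    obtain ⟨ξ, hmem, hξ⟩ := exists_hasDerivAt_eq_slope Φd S2 hlt hcont
      (fun x hx => HΦd x (hsub (Set.Ioo_subset_Icc_self hx)))
    refine ⟨ξ, hmem, ?_⟩
    rw [hξ, div_mul_cancel₀ _ (sub_ne_zero.2 (ne_of_gt hlt))]
  -- Cauchy MVT, second order
  have hA : ∀ r, 1 ≤ r → ∃ ξ, ξ ∈ Set.Ioo (c r) τ ∧
      Φ τ - Φ (c r) = Φd (c r) * (τ - c r) + S2 ξ / 2 * (τ - c r) ^ 2 := by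
    intro r hr
    have hlt := (hcbound r hr).2
    have hsub := hsubt r hr
    have hgd : ∀ x ∈ Set.Ioo (c r) τ,
        HasDerivAt (fun y => Φ τ - Φ y - Φd y * (τ - y)) (-(S2 x * (τ - x))) x := by
      intro x hx
      have h1 := HΦ x (hsub (Set.Ioo_subset_Icc_self hx))
      have h2 := HΦd x (hsub (Set.Ioo_subset_Icc_self hx))
      have h3 : HasDerivAt (fun y : ℝ => τ - y) (-1) x := by
        simpa using (hasDerivAt_id x).const_sub τ
      have h4 := ((hasDerivAt_const x (Φ τ)).sub h1).sub (h2.mul h3)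
      exact h4.congr_deriv (by ring)
    have hfd : ∀ x ∈ Set.Ioo (c r) τ,
        HasDerivAt (fun y : ℝ => (τ - y) ^ 2) (-(2 * (τ - x))) x := by
      intro x hx
      have h3 : HasDerivAt (fun y : ℝ => τ - y) (-1) x := by
        simpa using (hasDerivAt_id x).const_sub τ
      have h4 := h3.pow 2
      refine h4.congr_deriv ?_
      rw [show (2:ℕ) - 1 = 1 from rfl, pow_one]
      ring
    have hgc : ContinuousOn (fun y => Φ τ - Φ y - Φd y * (τ - y)) (Set.Icc (c r) τ) := by
      apply ContinuousOn.sub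
      · exact continuousOn_const.sub
          (fun x hx => (HΦ x (hsub hx)).continuousAt.continuousWithinAt)
      · exact ContinuousOn.mul
          (fun x hx => (HΦd x (hsub hx)).continuousAt.continuousWithinAt)
          (continuousOn_const.sub continuousOn_id)
    have hfc : ContinuousOn (fun y : ℝ => (τ - y) ^ 2) (Set.Icc (c r) τ) :=
      (continuousOn_const.sub continuousOn_id).pow 2
    obtain ⟨ξ, hmem, hξ⟩ := exists_ratio_hasDerivAt_eq_ratio_slope
      (fun y : ℝ => (τ - y) ^ 2) (fun x => -(2 * (τ - x))) hlt hfc hfd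
      (fun y => Φ τ - Φ y - Φd y * (τ - y)) (fun x => -(S2 x * (τ - x))) hgc hgd
    refine ⟨ξ, hmem, ?_⟩
    have hτξ : τ - ξ ≠ 0 := sub_ne_zero.2 (ne_of_gt hmem.2)
    have key : ((Φ τ - Φ (c r) - Φd (c r) * (τ - c r)) * 2) * (τ - ξ)
        = ((τ - c r) ^ 2 * S2 ξ) * (τ - ξ) := by linear_combination hξ
    have key2 := mul_right_cancel₀ hτξ key
    linear_combination key2 / 2
  -- choice functions
  have hAc : ∀ r : ℕ, ∃ ξ : ℝ, 1 ≤ r → ξ ∈ Set.Ioo (c r) τ ∧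
      Φ τ - Φ (c r) = Φd (c r) * (τ - c r) + S2 ξ / 2 * (τ - c r) ^ 2 := by
    intro r
    by_cases hr : 1 ≤ r
    · obtain ⟨ξ, h1, h2⟩ := hA r hr; exact ⟨ξ, fun _ => ⟨h1, h2⟩⟩
    · exact ⟨τ, fun h => absurd h hr⟩
  have hBc : ∀ r : ℕ, ∃ ξ : ℝ, 1 ≤ r → ξ ∈ Set.Ioo (c r) τ ∧
      Φd τ - Φd (c r) = S2 ξ * (τ - c r) := by
    intro r
    by_cases hr : 1 ≤ r
    · obtain ⟨ξ, h1, h2⟩ := hB r hr; exact ⟨ξ, fun _ => ⟨h1, h2⟩⟩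
    · exact ⟨τ, fun h => absurd h hr⟩
  choose ξA hξA using hAc
  choose ξB hξB using hBc
  have hξA_lim : Tendsto ξA atTop (𝓝 τ) := by
    apply tendsto_of_tendsto_of_tendsto_of_le_of_le' hlim tendsto_const_nhds
    · filter_upwards [eventually_ge_atTop 1] with r hr; exact ((hξA r hr).1.1).le
    · filter_upwards [eventually_ge_atTop 1] with r hr; exact ((hξA r hr).1.2).le
  have hξB_lim : Tendsto ξB atTop (𝓝 τ) := by
    apply tendsto_of_tendsto_of_tendsto_of_le_of_le' hlim tendsto_const_nhds
    · filter_upwards [eventually_ge_atTop 1] with r hr; exact ((hξB r hr).1.1).le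
    · filter_upwards [eventually_ge_atTop 1] with r hr; exact ((hξB r hr).1.2).le
  have hS2A : Tendsto (fun r => S2 (ξA r)) atTop (𝓝 Φdd) := by
    have h := HS2.tendsto.comp hξA_lim
    rwa [hS2τ] at h
  have hS2B : Tendsto (fun r => S2 (ξB r)) atTop (𝓝 Φdd) := by
    have h := HS2.tendsto.comp hξB_lim
    rwa [hS2τ] at h
  have hΦdc : Tendsto (fun r => Φd (c r)) atTop (𝓝 (Φd τ)) := hcontΦd.tendsto.comp hlim
  -- P and Q
  have hP_lim : Tendsto (fun r => ρ * Φd (c r) + ρ * S2 (ξA r) / 2 * (τ - c r))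
      atTop (𝓝 1) := by
    have h := (hΦdc.const_mul ρ).add (((hS2A.const_mul ρ).div_const 2).mul hd_lim)
    rwa [mul_zero, add_zero, hρΦd] at h
  have hQ_lim : Tendsto (fun r => ρ * S2 (ξB r) - ρ * S2 (ξA r) / 2)
      atTop (𝓝 (ρ * Φdd / 2)) := by
    have h := (hS2B.const_mul ρ).sub ((hS2A.const_mul ρ).div_const 2)
    rwa [show ρ * Φdd - ρ * Φdd / 2 = ρ * Φdd / 2 by ring] at h
  -- key identities
  have hPd : ∀ r, 1 ≤ r → τ - c (r + 1)
      = (τ - c r) * (ρ * Φd (c r) + ρ * S2 (ξA r) / 2 * (τ - c r)) := by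
    intro r hr
    rw [hcrec r hr]
    linear_combination -hρΦτ + ρ * (hξA r hr).2
  have hQd : ∀ r, 1 ≤ r → 1 - (ρ * Φd (c r) + ρ * S2 (ξA r) / 2 * (τ - c r))
      = (ρ * S2 (ξB r) - ρ * S2 (ξA r) / 2) * (τ - c r) := by
    intro r hr
    linear_combination ρ * (hξB r hr).2 - hρΦd
  have hPne : ∀ r, 1 ≤ r → ρ * Φd (c r) + ρ * S2 (ξA r) / 2 * (τ - c r) ≠ 0 := by
    intro r hr h0
    have h1 := hPd r hr
    rw [h0, mul_zero] at h1
    exact (hd_pos (r + 1) (by omega)).ne' h1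
  -- the increment sequence
  have he : ∀ r, 1 ≤ r → (τ - c (r + 1))⁻¹ - (τ - c r)⁻¹
      = (ρ * S2 (ξB r) - ρ * S2 (ξA r) / 2) / (ρ * Φd (c r) + ρ * S2 (ξA r) / 2 * (τ - c r)) := by
    intro r hr
    have hdr : τ - c r ≠ 0 := (hd_pos r hr).ne'
    have hP := hPne r hr
    rw [hPd r hr, mul_inv, eq_div_iff hP]
    calc ((τ - c r)⁻¹ * (ρ * Φd (c r) + ρ * S2 (ξA r) / 2 * (τ - c r))⁻¹ - (τ - c r)⁻¹)
          * (ρ * Φd (c r) + ρ * S2 (ξA r) / 2 * (τ - c r))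
        = (τ - c r)⁻¹ * ((ρ * Φd (c r) + ρ * S2 (ξA r) / 2 * (τ - c r))⁻¹
            * (ρ * Φd (c r) + ρ * S2 (ξA r) / 2 * (τ - c r)))
          - (τ - c r)⁻¹ * (ρ * Φd (c r) + ρ * S2 (ξA r) / 2 * (τ - c r)) := by ring
      _ = (τ - c r)⁻¹ * (1 - (ρ * Φd (c r) + ρ * S2 (ξA r) / 2 * (τ - c r))) := by
          rw [inv_mul_cancel₀ hP]; ring
      _ = (τ - c r)⁻¹ * ((ρ * S2 (ξB r) - ρ * S2 (ξA r) / 2) * (τ - c r)) := by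
          rw [hQd r hr]
      _ = (ρ * S2 (ξB r) - ρ * S2 (ξA r) / 2) * ((τ - c r)⁻¹ * (τ - c r)) := by ring
      _ = ρ * S2 (ξB r) - ρ * S2 (ξA r) / 2 := by rw [inv_mul_cancel₀ hdr, mul_one]
  have he_lim : Tendsto (fun r => (τ - c (r + 1))⁻¹ - (τ - c r)⁻¹) atTop (𝓝 (ρ * Φdd / 2)) := by
    have h := hQ_lim.div hP_lim one_ne_zero
    rw [div_one] at h
    apply h.congr'
    filter_upwards [eventually_ge_atTop 1] with r hr
    exact (he r hr).symm
  -- telescoping and Cesàro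
  set v : ℕ → ℝ := fun i => if i = 0 then 0 else (τ - c (i + 1))⁻¹ - (τ - c i)⁻¹ with hvdef
  have hv_lim : Tendsto v atTop (𝓝 (ρ * Φdd / 2)) := by
    apply he_lim.congr'
    filter_upwards [eventually_ge_atTop 1] with i hi
    simp only [hvdef]
    rw [if_neg (show ¬ i = 0 by omega)]
  have hu_eq : ∀ r, 1 ≤ r → (τ - c r)⁻¹ = (τ - c 1)⁻¹ + ∑ i ∈ Finset.range r, v i := by
    intro r hr
    induction r, hr using Nat.le_induction with
    | base => simp [hvdef]
    | succ r hr ih =>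
      rw [Finset.sum_range_succ, ← add_assoc, ← ih]
      have hvr : v r = (τ - c (r + 1))⁻¹ - (τ - c r)⁻¹ := by
        simp only [hvdef]
        rw [if_neg (show ¬ r = 0 by omega)]
      rw [hvr]; ring
  have hcesaro : Tendsto (fun n : ℕ => (n : ℝ)⁻¹ * ∑ i ∈ Finset.range n, v i)
      atTop (𝓝 (ρ * Φdd / 2)) := hv_lim.cesaro
  have hu_div : Tendsto (fun r : ℕ => (τ - c r)⁻¹ / r) atTop (𝓝 (ρ * Φdd / 2)) := by
    have h0 : Tendsto (fun r : ℕ => (τ - c 1)⁻¹ * (r : ℝ)⁻¹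
        + (r : ℝ)⁻¹ * ∑ i ∈ Finset.range r, v i) atTop (𝓝 (ρ * Φdd / 2)) := by
      have h1 := (tendsto_inv_atTop_nhds_zero_nat.const_mul ((τ - c 1)⁻¹)).add hcesaro
      rwa [mul_zero, zero_add] at h1
    apply h0.congr'
    filter_upwards [eventually_ge_atTop 1] with r hr
    rw [hu_eq r hr]
    ring
  -- conclusion
  have hL_pos : 0 < ρ * Φdd / 2 := by positivity
  have hfin := hu_div.inv₀ hL_pos.ne'
  rw [show (ρ * Φdd / 2)⁻¹ = 2 / (ρ * Φdd) by rw [inv_div]] at hfin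
  apply hfin.congr'
  filter_upwards [eventually_ge_atTop 1] with r hr
  rw [inv_div, div_eq_mul_inv, inv_inv]
end

section
/- Let σ_r² = (4ρτ³d_r − 4ρτ²c_r d_r + (2τ² − α²)c_r² − 2τ³c_r)/(2τ⁴) with α² = 2τ/(ρΦ''(τ)), where c_r, d_r are as above (c_r → τ with τ − c_r ~ 2/(ρΦ''(τ)r), and d_r ~ τr/(3ρ)). Then σ_r² → 1/(3ρτΦ''(τ)) as r → ∞; in particular σ_r² > 0 for all sufficiently large r. -/
open Filter Topology

/-- Let `σ_r² = (4ρτ³d_r − 4ρτ²c_r d_r + (2τ² − α²)c_r² − 2τ³c_r)/(2τ⁴)` with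
`α² = 2τ/(ρΦ''(τ))`, where `c_r → τ` with `τ − c_r ~ 2/(ρΦ''(τ)·r)` and
`d_r ~ τr/(3ρ)` are as in the standard simply generated setup.  Then
`σ_r² → 1/(3ρτΦ''(τ))` as `r → ∞`; in particular `σ_r² > 0` for all sufficiently
large `r`. -/
theorem sigma_sq_limit (w : ℕ → ℝ) (hw : ∀ k, 0 ≤ w k) (hw0 : w 0 = 1)
    (hwk : ∃ k, 1 < k ∧ 0 < w k)
    (τ : ℝ) (hτ : 0 < τ)
    (hrad : ∃ s, τ < s ∧ Summable fun k => w k * s ^ k)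
    (Φ Φd : ℝ → ℝ) (Φdd : ℝ)
    (hΦ : ∀ t, Φ t = ∑' k : ℕ, w k * t ^ k)
    (hΦd : ∀ t, Φd t = ∑' k : ℕ, (k : ℝ) * w k * t ^ (k - 1))
    (hΦdd : Φdd = ∑' k : ℕ, (k : ℝ) * ((k : ℝ) - 1) * w k * τ ^ (k - 2))
    (hcrit : Φ τ = τ * Φd τ)
    (ρ : ℝ) (hρ : ρ = τ / Φ τ) (hΦddpos : 0 < Φdd)
    (c : ℕ → ℝ) (hc1 : c 1 = ρ) (hcrec : ∀ r, 1 ≤ r → c (r + 1) = ρ * Φ (c r))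
    (hlim : Tendsto c atTop (𝓝 τ))
    (hcasym : Tendsto (fun r : ℕ => (r : ℝ) * (τ - c r)) atTop (𝓝 (2 / (ρ * Φdd))))
    (d : ℕ → ℝ) (hd1 : d 1 = 1)
    (hdrec : ∀ r, 1 ≤ r → d (r + 1) = ρ * Φd (c r) * d r + c (r + 1) / ρ)
    (hdasym : Tendsto (fun r : ℕ => d r / r) atTop (𝓝 (τ / (3 * ρ))))
    (α2 : ℝ) (hα2 : α2 = 2 * τ / (ρ * Φdd))
    (σsq : ℕ → ℝ)
    (hσ : ∀ r, σsq r = (4 * ρ * τ ^ 3 * d r - 4 * ρ * τ ^ 2 * c r * d r +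
      (2 * τ ^ 2 - α2) * (c r) ^ 2 - 2 * τ ^ 3 * c r) / (2 * τ ^ 4)) :
    Tendsto σsq atTop (𝓝 (1 / (3 * ρ * τ * Φdd))) ∧
      ∃ N : ℕ, ∀ r, N ≤ r → 0 < σsq r := by

  -- ρ > 0
  obtain ⟨s, hτs, hsum⟩ := hrad
  have hsumτ : Summable fun k => w k * τ ^ k := by
    apply Summable.of_nonneg_of_le (fun k => mul_nonneg (hw k) (pow_nonneg hτ.le k))
      (fun k => ?_) hsum
    exact mul_le_mul_of_nonneg_left (pow_le_pow_left₀ hτ.le hτs.le k) (hw k)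
  have hΦτpos : 0 < Φ τ := by
    rw [hΦ τ]
    have h0 : (1 : ℝ) = w 0 * τ ^ 0 := by simp [hw0]
    calc (0:ℝ) < 1 := one_pos
      _ = w 0 * τ ^ 0 := h0
      _ ≤ ∑' k : ℕ, w k * τ ^ k :=
        Summable.le_tsum hsumτ 0 (fun k _ => mul_nonneg (hw k) (pow_nonneg hτ.le k))
  have hρpos : 0 < ρ := by rw [hρ]; positivity
  have hτ0 : τ ≠ 0 := hτ.ne'
  have hρ0 : ρ ≠ 0 := hρpos.ne'
  have hΦdd0 : Φdd ≠ 0 := hΦddpos.ne'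
  -- main limit
  have key : Tendsto (fun r : ℕ => (4 * ρ * τ ^ 2 * (((r : ℝ) * (τ - c r)) * (d r / r))
      + (2 * τ ^ 2 - α2) * (c r) ^ 2 - 2 * τ ^ 3 * c r) / (2 * τ ^ 4)) atTop
      (𝓝 (1 / (3 * ρ * τ * Φdd))) := by
    have hval : (4 * ρ * τ ^ 2 * ((2 / (ρ * Φdd)) * (τ / (3 * ρ)))
        + (2 * τ ^ 2 - α2) * τ ^ 2 - 2 * τ ^ 3 * τ) / (2 * τ ^ 4)
        = 1 / (3 * ρ * τ * Φdd) := by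
      rw [hα2]; field_simp; ring
    rw [← hval]
    exact ((((hcasym.mul hdasym).const_mul _).add
      ((hlim.pow 2).const_mul _)).sub (hlim.const_mul _)).div_const _
  have heq : ∀ᶠ r : ℕ in atTop, (4 * ρ * τ ^ 2 * (((r : ℝ) * (τ - c r)) * (d r / r))
      + (2 * τ ^ 2 - α2) * (c r) ^ 2 - 2 * τ ^ 3 * c r) / (2 * τ ^ 4) = σsq r := by
    filter_upwards [eventually_ge_atTop 1] with r hr
    have hr0 : (r : ℝ) ≠ 0 := Nat.cast_ne_zero.mpr (by omega)
    have hprod : ((r : ℝ) * (τ - c r)) * (d r / r) = (τ - c r) * d r := by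
      field_simp
    rw [hprod, hσ r]
    ring_nf
  have hT : Tendsto σsq atTop (𝓝 (1 / (3 * ρ * τ * Φdd))) := key.congr' heq
  refine ⟨hT, ?_⟩
  have hpos : (0:ℝ) < 1 / (3 * ρ * τ * Φdd) := by positivity
  have := hT.eventually (eventually_gt_nhds hpos)
  exact eventually_atTop.mp this
end
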